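/- Let V_N(x,y) be defined recursively by V_0(x,y) = y v_0(x) with v_0 ≥ 0, and V_{N+1}(x,y) = min over a ∈ A(x) of max over b ∈ B(x,y,a) of Σ_{x'} (y b_{x'} c(x,a,x') + β V_N(x', y b_{x'})) p(x'|x,a), where costs c are nonnegative and B(x,y,a) is as in the CVaR uncertainty set. Then for every N and every x, the function y ↦ V_N(x,y) is continuous, concave, nondecreasing, and piecewise linear on [0,1]. -/

import Mathlib

open Set

/-- `f : [0,1] → ℝ` is piecewise linear: there is a finite partition
`0 = u₀ < u₁ < … < u_n = 1` such that `f` is affine on each `[u_{i-1}, u_i]`. -/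
def IsPiecewiseLinearOn01 (f : ℝ → ℝ) : Prop :=
  ∃ n : ℕ, 0 < n ∧ ∃ u : ℕ → ℝ, u 0 = 0 ∧ u n = 1 ∧ (∀ i < n, u i < u (i + 1)) ∧
    ∀ i < n, ∃ c d : ℝ, ∀ t ∈ Set.Icc (u i) (u (i + 1)), f t = c * t + d

namespace CVaRAux

/-- minimum of a finite nonempty family of affine functions -/
noncomputable def mA (F : Finset (ℝ × ℝ)) (hF : F.Nonempty) (t : ℝ) : ℝ :=
  F.inf' hF fun q => q.1 * t + q.2

lemma mA_le {F : Finset (ℝ × ℝ)} (hF : F.Nonempty) {q : ℝ × ℝ} (hq : q ∈ F) (t : ℝ) :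
    mA F hF t ≤ q.1 * t + q.2 := Finset.inf'_le _ hq

lemma le_mA {F : Finset (ℝ × ℝ)} (hF : F.Nonempty) {t a : ℝ}
    (h : ∀ q ∈ F, a ≤ q.1 * t + q.2) : a ≤ mA F hF t := Finset.le_inf' hF _ h

lemma exists_mA_eq {F : Finset (ℝ × ℝ)} (hF : F.Nonempty) (t : ℝ) :
    ∃ q ∈ F, mA F hF t = q.1 * t + q.2 := Finset.exists_mem_eq_inf' hF _

lemma mA_mono {F : Finset (ℝ × ℝ)} (hF : F.Nonempty) (hs : ∀ q ∈ F, 0 ≤ q.1) :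
    Monotone (mA F hF) := by
  intro s t hst
  obtain ⟨q, hq, hqe⟩ := exists_mA_eq hF t
  rw [hqe]
  calc mA F hF s ≤ q.1 * s + q.2 := mA_le hF hq s
    _ ≤ q.1 * t + q.2 := by nlinarith [hs q hq]

lemma mA_combo {F : Finset (ℝ × ℝ)} (hF : F.Nonempty) {a b : ℝ} (ha : 0 ≤ a) (hb : 0 ≤ b)
    (hab : a + b = 1) (s t : ℝ) :
    a * mA F hF s + b * mA F hF t ≤ mA F hF (a * s + b * t) := by
  apply le_mA
  intro q hq
  have h1 := mA_le hF hq s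
  have h2 := mA_le hF hq t
  calc a * mA F hF s + b * mA F hF t
      ≤ a * (q.1 * s + q.2) + b * (q.1 * t + q.2) :=
        add_le_add (mul_le_mul_of_nonneg_left h1 ha) (mul_le_mul_of_nonneg_left h2 hb)
    _ = q.1 * (a * s + b * t) + (a + b) * q.2 := by ring
    _ = q.1 * (a * s + b * t) + q.2 := by rw [hab, one_mul]

lemma mA_continuous (F : Finset (ℝ × ℝ)) (hF : F.Nonempty) : Continuous (mA F hF) := by
  induction hF using Finset.Nonempty.cons_induction with
  | singleton q =>
      have h : mA {q} (Finset.singleton_nonempty q) = fun t => q.1 * t + q.2 :=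
        funext fun t => by simp [mA]
      rw [h]; exact (continuous_const.mul continuous_id).add continuous_const
  | cons q s hq hs ih =>
      have : mA (Finset.cons q s hq) (Finset.cons_nonempty hq) =
          fun t => (q.1 * t + q.2) ⊓ (mA s hs t) := by
        funext t; show (Finset.cons q s hq).inf' _ (fun q => q.1 * t + q.2) = _
        rw [Finset.inf'_cons (H := hs)]; rfl
      rw [this]
      exact ((continuous_const.mul continuous_id).add continuous_const).min ih




/-- candidate breakpoints: 0, 1 and all crossings of pairs of lines inside [0,1] -/
noncomputable def crossSet (F : Finset (ℝ × ℝ)) : Finset ℝ :=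
  insert 0 (insert 1 (((F ×ˢ F).image fun qq : (ℝ × ℝ) × (ℝ × ℝ) =>
    (qq.1.2 - qq.2.2) / (qq.2.1 - qq.1.1)).filter fun s => 0 ≤ s ∧ s ≤ 1))

lemma zero_mem_crossSet (F : Finset (ℝ × ℝ)) : (0 : ℝ) ∈ crossSet F := by
  simp [crossSet]

lemma one_mem_crossSet (F : Finset (ℝ × ℝ)) : (1 : ℝ) ∈ crossSet F := by
  simp [crossSet]

lemma crossSet_nonempty (F : Finset (ℝ × ℝ)) : (crossSet F).Nonempty :=
  ⟨0, zero_mem_crossSet F⟩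

lemma crossSet_subset {F : Finset (ℝ × ℝ)} {s : ℝ} (hs : s ∈ crossSet F) : 0 ≤ s ∧ s ≤ 1 := by
  simp only [crossSet, Finset.mem_insert, Finset.mem_filter] at hs
  rcases hs with h | h | h
  · simp [h]
  · simp [h]
  · exact h.2

lemma cross_mem_crossSet {F : Finset (ℝ × ℝ)} {q q' : ℝ × ℝ} (hq : q ∈ F) (hq' : q' ∈ F)
    (hne : q.1 ≠ q'.1) {s : ℝ} (hs0 : 0 ≤ s) (hs1 : s ≤ 1)
    (heq : q.1 * s + q.2 = q'.1 * s + q'.2) : s ∈ crossSet F := by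
  have hd : q'.1 - q.1 ≠ 0 := fun h => hne (by linarith [sub_eq_zero.mp h])
  have hval : s = (q.2 - q'.2) / (q'.1 - q.1) := by
    field_simp
    linarith
  simp only [crossSet, Finset.mem_insert, Finset.mem_filter, Finset.mem_image,
    Finset.mem_product]
  right; right
  exact ⟨⟨(q, q'), ⟨hq, hq'⟩, hval.symm⟩, hs0, hs1⟩

/-- On an interval free of crossings, `mA` coincides with a single line. -/
lemma mA_affine_of_no_cross {F : Finset (ℝ × ℝ)} (hF : F.Nonempty) {u v : ℝ} (huv : u < v)
    (hcr : ∀ q ∈ F, ∀ q' ∈ F, q.1 ≠ q'.1 → ∀ s, u < s → s < v →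
      q.1 * s + q.2 ≠ q'.1 * s + q'.2) :
    ∃ q ∈ F, ∀ t, u ≤ t → t ≤ v → mA F hF t = q.1 * t + q.2 := by
  set m : ℝ := (u + v) / 2 with hm
  have hum : u < m := by simp only [hm]; linarith
  have hmv : m < v := by simp only [hm]; linarith
  obtain ⟨q, hq, hqe⟩ := Finset.exists_mem_eq_inf' hF (fun q : ℝ × ℝ => q.1 * m + q.2)
  refine ⟨q, hq, fun t htu htv => ?_⟩
  refine le_antisymm (Finset.inf'_le _ hq) (Finset.le_inf' hF _ fun q' hq' => ?_)
  by_contra hlt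
  push_neg at hlt
  -- δ := line q - line q' ; δ t > 0, δ m ≤ 0
  have hdm : q.1 * m + q.2 - (q'.1 * m + q'.2) ≤ 0 := by
    have : (F.inf' hF fun q : ℝ × ℝ => q.1 * m + q.2) ≤ q'.1 * m + q'.2 :=
      Finset.inf'_le _ hq'
    rw [hqe] at this; linarith
  set dt : ℝ := q.1 * t + q.2 - (q'.1 * t + q'.2) with hdt
  set dm : ℝ := q.1 * m + q.2 - (q'.1 * m + q'.2) with hdmdef
  have hdtpos : 0 < dt := by simp only [hdt]; linarith
  have hden : 0 < dt - dm := by linarith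
  set θ : ℝ := dt / (dt - dm) with hθ
  have hθpos : 0 < θ := div_pos hdtpos hden
  have hθle : θ ≤ 1 := by
    rw [hθ, div_le_one hden]; linarith
  set s₀ : ℝ := θ * m + (1 - θ) * t with hs₀
  have hs₀u : u < s₀ := by
    have h1 : θ * u < θ * m := by nlinarith
    have h2 : (1 - θ) * u ≤ (1 - θ) * t := by nlinarith
    calc u = θ * u + (1 - θ) * u := by ring
      _ < θ * m + (1 - θ) * t := by linarith
  have hs₀v : s₀ < v := by
    have h1 : θ * m < θ * v := by nlinarith
    have h2 : (1 - θ) * t ≤ (1 - θ) * v := by nlinarith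
    calc s₀ = θ * m + (1 - θ) * t := rfl
      _ < θ * v + (1 - θ) * v := by linarith
      _ = v := by ring
  have hslope : q.1 ≠ q'.1 := by
    intro h
    have : dt = dm := by simp only [hdt, hdmdef, h]; ring
    linarith
  have hzero : q.1 * s₀ + q.2 = q'.1 * s₀ + q'.2 := by
    have hkey : q.1 * s₀ + q.2 - (q'.1 * s₀ + q'.2) = θ * dm + (1 - θ) * dt := by
      simp only [hs₀, hdt, hdmdef]; ring
    have : θ * dm + (1 - θ) * dt = 0 := by
      rw [hθ]; field_simp; ring
    linarith [hkey, this]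
  exact hcr q hq q' hq' hslope s₀ hs₀u hs₀v hzero


/-- interpolation core: every `t ∈ [0,1]` is a convex combination of two neighboring
candidate points, compatibly with `mA · - lam * ·` for every `lam`. -/
lemma mA_core {F : Finset (ℝ × ℝ)} (hF : F.Nonempty) {t : ℝ} (ht0 : 0 ≤ t) (ht1 : t ≤ 1) :
    ∃ u ∈ crossSet F, ∃ v ∈ crossSet F, u ≤ t ∧ t ≤ v ∧ ∃ θ : ℝ, 0 ≤ θ ∧ θ ≤ 1 ∧
      t = θ * u + (1 - θ) * v ∧
      ∀ lam : ℝ, mA F hF t - lam * t =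
        θ * (mA F hF u - lam * u) + (1 - θ) * (mA F hF v - lam * v) := by
  classical
  set S1 := (crossSet F).filter (fun s => s ≤ t) with hS1
  have hS1ne : S1.Nonempty := ⟨0, by simp [hS1, Finset.mem_filter, zero_mem_crossSet, ht0]⟩
  set S2 := (crossSet F).filter (fun s => t ≤ s) with hS2
  have hS2ne : S2.Nonempty := ⟨1, by simp [hS2, Finset.mem_filter, one_mem_crossSet, ht1]⟩
  set u := S1.max' hS1ne with hu
  set v := S2.min' hS2ne with hv
  have huS1 : u ∈ S1 := S1.max'_mem hS1ne
  have hvS2 : v ∈ S2 := S2.min'_mem hS2ne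
  have hucr : u ∈ crossSet F := (Finset.mem_filter.mp huS1).1
  have hut : u ≤ t := (Finset.mem_filter.mp huS1).2
  have hvcr : v ∈ crossSet F := (Finset.mem_filter.mp hvS2).1
  have htv : t ≤ v := (Finset.mem_filter.mp hvS2).2
  refine ⟨u, hucr, v, hvcr, hut, htv, ?_⟩
  rcases eq_or_lt_of_le (le_trans hut htv) with heq | hlt
  · -- u = v, hence u = t = v
    have hut' : u = t := le_antisymm hut (heq ▸ htv)
    refine ⟨1, zero_le_one, le_refl 1, by rw [hut']; ring, fun lam => by rw [hut']; ring⟩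
  · -- u < v : no crossing inside (u, v)
    have hnocross : ∀ q ∈ F, ∀ q' ∈ F, q.1 ≠ q'.1 → ∀ s, u < s → s < v →
        q.1 * s + q.2 ≠ q'.1 * s + q'.2 := by
      intro q hq q' hq' hne s hsu hsv heqs
      have hs0 : 0 ≤ s := le_trans (crossSet_subset hucr).1 (le_of_lt hsu)
      have hs1 : s ≤ 1 := le_trans (le_of_lt hsv) (crossSet_subset hvcr).2
      have hscr : s ∈ crossSet F := cross_mem_crossSet hq hq' hne hs0 hs1 heqs
      rcases le_total s t with h | h
      · exact absurd (S1.le_max' s (Finset.mem_filter.mpr ⟨hscr, h⟩)) (not_le.mpr hsu)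
      · exact absurd (S2.min'_le s (Finset.mem_filter.mpr ⟨hscr, h⟩)) (not_le.mpr hsv)
    obtain ⟨q, hq, hqaff⟩ := mA_affine_of_no_cross hF hlt hnocross
    have hvu : 0 < v - u := by linarith
    refine ⟨(v - t) / (v - u), div_nonneg (by linarith) (le_of_lt hvu), ?_, ?_, ?_⟩
    · rw [div_le_one hvu]; linarith
    · field_simp; ring
    · intro lam
      have h1 := hqaff t hut htv
      have h2 := hqaff u (le_refl u) (le_of_lt hlt)
      have h3 := hqaff v (le_of_lt hlt) (le_refl v)
      rw [h1, h2, h3]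
      field_simp
      ring
    
noncomputable def phi (F : Finset (ℝ × ℝ)) (hF : F.Nonempty) (lam : ℝ) : ℝ :=
  (crossSet F).sup' (crossSet_nonempty F) fun s => mA F hF s - lam * s

lemma le_phi {F : Finset (ℝ × ℝ)} (hF : F.Nonempty) (lam : ℝ) {s : ℝ}
    (hs : s ∈ crossSet F) : mA F hF s - lam * s ≤ phi F hF lam :=
  Finset.le_sup' (fun s => mA F hF s - lam * s) hs

/-- Lemma A: the value at any point of `[0,1]` is dominated by the best candidate value. -/
lemma val_le_phi {F : Finset (ℝ × ℝ)} (hF : F.Nonempty) (lam : ℝ) {t : ℝ}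
    (ht0 : 0 ≤ t) (ht1 : t ≤ 1) : mA F hF t - lam * t ≤ phi F hF lam := by
  obtain ⟨u, hu, v, hv, _, _, θ, hθ0, hθ1, _, hid⟩ := mA_core hF ht0 ht1
  rw [hid lam]
  have h1 := le_phi hF lam hu
  have h2 := le_phi hF lam hv
  nlinarith

noncomputable def amax (F : Finset (ℝ × ℝ)) (hF : F.Nonempty) (lam : ℝ) : Finset ℝ :=
  (crossSet F).filter fun s => mA F hF s - lam * s = phi F hF lam

lemma amax_nonempty (F : Finset (ℝ × ℝ)) (hF : F.Nonempty) (lam : ℝ) :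
    (amax F hF lam).Nonempty := by
  obtain ⟨s, hs, hse⟩ := Finset.exists_mem_eq_sup' (crossSet_nonempty F)
    (fun s => mA F hF s - lam * s)
  exact ⟨s, Finset.mem_filter.mpr ⟨hs, hse.symm⟩⟩

noncomputable def zlo (F : Finset (ℝ × ℝ)) (hF : F.Nonempty) (lam : ℝ) : ℝ :=
  (amax F hF lam).min' (amax_nonempty F hF lam)

noncomputable def zhi (F : Finset (ℝ × ℝ)) (hF : F.Nonempty) (lam : ℝ) : ℝ :=
  (amax F hF lam).max' (amax_nonempty F hF lam)

lemma zlo_mem (F : Finset (ℝ × ℝ)) (hF : F.Nonempty) (lam : ℝ) :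
    zlo F hF lam ∈ crossSet F ∧ mA F hF (zlo F hF lam) - lam * zlo F hF lam = phi F hF lam := by
  have := (amax F hF lam).min'_mem (amax_nonempty F hF lam)
  exact ⟨(Finset.mem_filter.mp this).1, (Finset.mem_filter.mp this).2⟩

lemma zhi_mem (F : Finset (ℝ × ℝ)) (hF : F.Nonempty) (lam : ℝ) :
    zhi F hF lam ∈ crossSet F ∧ mA F hF (zhi F hF lam) - lam * zhi F hF lam = phi F hF lam := by
  have := (amax F hF lam).max'_mem (amax_nonempty F hF lam)
  exact ⟨(Finset.mem_filter.mp this).1, (Finset.mem_filter.mp this).2⟩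

/-- extreme maximizers bound every maximizer in `[0,1]`. -/
lemma zlo_le_zhi_of_max {F : Finset (ℝ × ℝ)} (hF : F.Nonempty) (lam : ℝ) {t : ℝ}
    (ht0 : 0 ≤ t) (ht1 : t ≤ 1) (hmax : mA F hF t - lam * t = phi F hF lam) :
    zlo F hF lam ≤ t ∧ t ≤ zhi F hF lam := by
  obtain ⟨u, hu, v, hv, hut, htv, θ, hθ0, hθ1, hteq, hid⟩ := mA_core hF ht0 ht1
  have h1 := le_phi hF lam hu
  have h2 := le_phi hF lam hv
  have hval := (hid lam).symm.trans hmax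
  rcases eq_or_lt_of_le hθ0 with h0 | h0
  · -- θ = 0 : t = v
    have htveq : t = v := by rw [hteq, ← h0]; ring
    have : t ∈ amax F hF lam := Finset.mem_filter.mpr ⟨htveq ▸ hv, hmax⟩
    exact ⟨Finset.min'_le _ _ this, Finset.le_max' _ _ this⟩
  rcases eq_or_lt_of_le hθ1 with h1' | h1'
  · -- θ = 1 : t = u
    have htueq : t = u := by rw [hteq, h1']; ring
    have : t ∈ amax F hF lam := Finset.mem_filter.mpr ⟨htueq ▸ hu, hmax⟩
    exact ⟨Finset.min'_le _ _ this, Finset.le_max' _ _ this⟩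
  · -- interior: both u, v are maximizers
    have huval : mA F hF u - lam * u = phi F hF lam := by nlinarith
    have hvval : mA F hF v - lam * v = phi F hF lam := by nlinarith
    have hum : u ∈ amax F hF lam := Finset.mem_filter.mpr ⟨hu, huval⟩
    have hvm : v ∈ amax F hF lam := Finset.mem_filter.mpr ⟨hv, hvval⟩
    exact ⟨le_trans (Finset.min'_le _ _ hum) hut, le_trans htv (Finset.le_max' _ _ hvm)⟩

lemma zhi_le_zlo {F : Finset (ℝ × ℝ)} (hF : F.Nonempty) {lam lam' : ℝ} (h : lam' < lam) :
    zhi F hF lam ≤ zlo F hF lam' := by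
  set a := zhi F hF lam
  set b := zlo F hF lam'
  have ha := zhi_mem F hF lam
  have hb := zlo_mem F hF lam'
  have h1 : mA F hF b - lam * b ≤ mA F hF a - lam * a := by
    rw [ha.2]; exact le_phi hF lam hb.1
  have h2 : mA F hF a - lam' * a ≤ mA F hF b - lam' * b := by
    rw [hb.2]; exact le_phi hF lam' ha.1
  nlinarith

lemma zlo_eq_zero {F : Finset (ℝ × ℝ)} (hF : F.Nonempty) {lam : ℝ}
    (h : ∀ q ∈ F, q.1 ≤ lam) : zlo F hF lam = 0 := by
  have hphi : phi F hF lam = mA F hF 0 := by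
    apply le_antisymm
    · apply Finset.sup'_le
      intro s hs
      obtain ⟨q0, hq0, hq0e⟩ := exists_mA_eq hF 0
      have hs0 := (crossSet_subset hs).1
      have : mA F hF s ≤ q0.1 * s + q0.2 := mA_le hF hq0 s
      have hq0lam := h q0 hq0
      nlinarith [hq0e]
    · have := le_phi hF lam (zero_mem_crossSet F)
      simpa using this
  have h0 : (0 : ℝ) ∈ amax F hF lam :=
    Finset.mem_filter.mpr ⟨zero_mem_crossSet F, by rw [hphi]; ring⟩
  have hle := Finset.min'_le _ _ h0
  have hge := (crossSet_subset (zlo_mem F hF lam).1).1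
  exact le_antisymm hle hge

lemma zhi_eq_one {F : Finset (ℝ × ℝ)} (hF : F.Nonempty) (h : ∀ q ∈ F, 0 ≤ q.1) :
    zhi F hF 0 = 1 := by
  have hphi : phi F hF 0 = mA F hF 1 := by
    apply le_antisymm
    · apply Finset.sup'_le
      intro s hs
      have := mA_mono hF h (crossSet_subset hs).2
      simpa using this
    · have := le_phi hF 0 (one_mem_crossSet F)
      simpa using this
  have h1 : (1 : ℝ) ∈ amax F hF 0 :=
    Finset.mem_filter.mpr ⟨one_mem_crossSet F, by rw [hphi]; ring⟩
  have hle := Finset.le_max' _ _ h1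
  have hge := (crossSet_subset (zhi_mem F hF 0).1).2
  exact le_antisymm hge hle

/-- every convex combination of the extreme maximizers is a maximizer. -/
lemma combo_is_max {F : Finset (ℝ × ℝ)} (hF : F.Nonempty) (lam : ℝ) {θ : ℝ}
    (hθ0 : 0 ≤ θ) (hθ1 : θ ≤ 1) :
    0 ≤ θ * zlo F hF lam + (1 - θ) * zhi F hF lam ∧
    θ * zlo F hF lam + (1 - θ) * zhi F hF lam ≤ 1 ∧
    mA F hF (θ * zlo F hF lam + (1 - θ) * zhi F hF lam) -
      lam * (θ * zlo F hF lam + (1 - θ) * zhi F hF lam) = phi F hF lam := by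
  have hlo := zlo_mem F hF lam
  have hhi := zhi_mem F hF lam
  have hlob := crossSet_subset hlo.1
  have hhib := crossSet_subset hhi.1
  have hz0 : 0 ≤ θ * zlo F hF lam + (1 - θ) * zhi F hF lam := by nlinarith
  have hz1 : θ * zlo F hF lam + (1 - θ) * zhi F hF lam ≤ 1 := by nlinarith
  refine ⟨hz0, hz1, le_antisymm (val_le_phi hF lam hz0 hz1) ?_⟩
  have hcombo := mA_combo hF hθ0 (by linarith : (0:ℝ) ≤ 1 - θ) (by ring) (zlo F hF lam) (zhi F hF lam)
  nlinarith [hlo.2, hhi.2]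


lemma mA_chord {F : Finset (ℝ × ℝ)} (hF : F.Nonempty) {x y w : ℝ}
    (hw1 : x ≤ w) (hw2 : w ≤ y) :
    (y - w) * mA F hF x + (w - x) * mA F hF y ≤ (y - x) * mA F hF w := by
  obtain ⟨q, hq, hqe⟩ := exists_mA_eq hF w
  have A := mA_le hF hq x
  have B := mA_le hF hq y
  have hA := mul_le_mul_of_nonneg_left A (by linarith : (0:ℝ) ≤ y - w)
  have hB := mul_le_mul_of_nonneg_left B (by linarith : (0:ℝ) ≤ w - x)
  rw [hqe]; nlinarith [hA, hB]

/-- key gap lemma: if no slope lies strictly between `lam' < lam` then the largest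
maximizer for `lam` is the smallest maximizer for `lam'`. -/
lemma zhi_eq_zlo_gap {F : Finset (ℝ × ℝ)} (hF : F.Nonempty) {lam lam' : ℝ} (h : lam' < lam)
    (hgap : ∀ q ∈ F, ¬(lam' < q.1 ∧ q.1 < lam)) :
    zhi F hF lam = zlo F hF lam' := by
  classical
  set z := zhi F hF lam with hzdef
  have hz := zhi_mem F hF lam
  have hzb := crossSet_subset hz.1
  have key : ∀ t, 0 ≤ t → t ≤ 1 → mA F hF t - lam' * t ≤ mA F hF z - lam' * z := by
    intro t ht0 ht1
    rcases le_or_gt t z with hle | hgt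
    · have h1 : mA F hF t - lam * t ≤ mA F hF z - lam * z := by
        rw [hz.2]; exact val_le_phi hF lam ht0 ht1
      nlinarith
    · by_contra hcon
      push_neg at hcon
      have hz1 : z < 1 := lt_of_lt_of_le hgt ht1
      set S := (crossSet F).filter (fun s => z < s) with hS
      have hSne : S.Nonempty := ⟨1, Finset.mem_filter.mpr ⟨one_mem_crossSet F, hz1⟩⟩
      set v := S.min' hSne with hv
      have hvS := S.min'_mem hSne
      have hvcr : v ∈ crossSet F := (Finset.mem_filter.mp hvS).1
      have hzv : z < v := (Finset.mem_filter.mp hvS).2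
      have hvb := crossSet_subset hvcr
      have hnocross : ∀ q ∈ F, ∀ q' ∈ F, q.1 ≠ q'.1 → ∀ s, z < s → s < v →
          q.1 * s + q.2 ≠ q'.1 * s + q'.2 := by
        intro q hq q' hq' hne s hs1 hs2 heq
        have hscr := cross_mem_crossSet hq hq' hne (le_trans hzb.1 hs1.le)
          (le_trans hs2.le hvb.2) heq
        exact absurd (S.min'_le s (Finset.mem_filter.mpr ⟨hscr, hs1⟩)) (not_le.mpr hs2)
      obtain ⟨q, hq, hqaff⟩ := mA_affine_of_no_cross hF hzv hnocross
      have hqz := hqaff z le_rfl hzv.le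
      have hqv := hqaff v hzv.le le_rfl
      have htz : 0 < t - z := sub_pos.mpr hgt
      have hql : lam' < q.1 := by
        rcases le_or_gt t v with htv | hvt
        · have hqt := hqaff t hgt.le htv
          by_contra hq1
          push_neg at hq1
          rw [hqt, hqz] at hcon
          nlinarith [mul_nonneg (sub_nonneg.mpr hq1) htz.le]
        · have hchord := mA_chord hF (x := z) (y := t) (w := v) hzv.le hvt.le
          by_contra hq1
          push_neg at hq1
          nlinarith [hchord, mul_lt_mul_of_pos_left hcon (sub_pos.mpr hzv),
            mul_pos (sub_pos.mpr hzv) htz, hqz, hqv,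
            mul_nonneg (mul_nonneg (sub_pos.mpr hzv).le htz.le) (sub_nonneg.mpr hq1)]
      have hqge : lam ≤ q.1 := by
        have := hgap q hq
        rcases le_or_gt lam q.1 with h' | h'
        · exact h'
        · exact absurd ⟨hql, h'⟩ this
      have hvmax : mA F hF v - lam * v = phi F hF lam := by
        refine le_antisymm (val_le_phi hF lam hvb.1 hvb.2) ?_
        rw [← hz.2, hqv, hqz]
        nlinarith [mul_le_mul_of_nonneg_left hqge (sub_pos.mpr hzv).le]
      have := (zlo_le_zhi_of_max hF lam hvb.1 hvb.2 hvmax).2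
      rw [← hzdef] at this
      linarith
  have hzmax : mA F hF z - lam' * z = phi F hF lam' := by
    refine le_antisymm (val_le_phi hF lam' hzb.1 hzb.2) ?_
    apply Finset.sup'_le
    intro s hs
    exact key s (crossSet_subset hs).1 (crossSet_subset hs).2
  exact le_antisymm (zhi_le_zlo hF h) (zlo_le_zhi_of_max hF lam' hzb.1 hzb.2 hzmax).1

lemma isPL_of_mA {F : Finset (ℝ × ℝ)} (hF : F.Nonempty) {f : ℝ → ℝ}
    (hf : ∀ t, 0 ≤ t → t ≤ 1 → f t = mA F hF t) : IsPiecewiseLinearOn01 f := by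
  classical
  set l := (crossSet F).sort (· ≤ ·) with hl
  have hlen : l.length = (crossSet F).card := Finset.length_sort _
  have hcard2 : 2 ≤ (crossSet F).card :=
    Finset.one_lt_card.mpr ⟨0, zero_mem_crossSet F, 1, one_mem_crossSet F, by norm_num⟩
  have hsort : List.Pairwise (· < ·) l := (Finset.sortedLT_sort _).pairwise
  refine ⟨(crossSet F).card - 1, by omega, fun i => l.getD i 0, ?_, ?_, ?_, ?_⟩
  · -- u 0 = 0
    show l.getD 0 0 = 0
    have h0 : 0 < l.length := by omega
    have : l.getD 0 0 = l[0] := List.getD_eq_getElem l 0 h0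
    rw [this, Finset.sorted_zero_eq_min' (h := h0)]
    refine le_antisymm (Finset.min'_le _ _ (zero_mem_crossSet F)) ?_
    exact Finset.le_min' _ _ _ fun y hy => (crossSet_subset hy).1
  · -- u n = 1
    have hn : (crossSet F).card - 1 < l.length := by omega
    show l.getD ((crossSet F).card - 1) 0 = 1
    have : l.getD ((crossSet F).card - 1) 0 = l[(crossSet F).card - 1] :=
      List.getD_eq_getElem l 0 hn
    rw [this]
    have hidx : (crossSet F).card - 1 = l.length - 1 := by omega
    have hlpos : 0 < l.length := by omega
    have hlast : l[(crossSet F).card - 1]'hn = l[l.length - 1]'(Nat.sub_lt hlpos one_pos) := by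
      simp only [hidx]
    rw [hlast, Finset.sorted_last_eq_max'_aux _ (Nat.sub_lt hlpos one_pos) (crossSet_nonempty F)]
    refine le_antisymm ?_ (Finset.le_max' _ _ (one_mem_crossSet F))
    exact Finset.max'_le _ _ _ fun y hy => (crossSet_subset hy).2
  · -- strictly increasing
    intro i hi
    have h1 : i < l.length := by omega
    have h2 : i + 1 < l.length := by omega
    show l.getD i 0 < l.getD (i+1) 0
    rw [List.getD_eq_getElem l 0 h1, List.getD_eq_getElem l 0 h2]
    exact List.Pairwise.rel_get_of_lt hsort (a := ⟨i, h1⟩) (b := ⟨i+1, h2⟩) (by simp)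
  · -- affine pieces
    intro i hi
    have h1 : i < l.length := by omega
    have h2 : i + 1 < l.length := by omega
    show ∃ c d, ∀ t ∈ Set.Icc (l.getD i 0) (l.getD (i+1) 0), f t = c * t + d
    rw [List.getD_eq_getElem l 0 h1, List.getD_eq_getElem l 0 h2]
    set a := l[i] with ha
    set b := l[i+1] with hb
    have hab : a < b := List.Pairwise.rel_get_of_lt hsort (a := ⟨i, h1⟩) (b := ⟨i+1, h2⟩) (by simp)
    have hamem : a ∈ crossSet F := (Finset.mem_sort _).1 (l.getElem_mem h1)
    have hbmem : b ∈ crossSet F := (Finset.mem_sort _).1 (l.getElem_mem h2)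
    have hano := crossSet_subset hamem
    have hbno := crossSet_subset hbmem
    have hnocross : ∀ q ∈ F, ∀ q' ∈ F, q.1 ≠ q'.1 → ∀ s, a < s → s < b →
        q.1 * s + q.2 ≠ q'.1 * s + q'.2 := by
      intro q hq q' hq' hne s hs1 hs2 heq
      have hscr := cross_mem_crossSet hq hq' hne (le_trans hano.1 hs1.le)
        (le_trans hs2.le hbno.2) heq
      have hsl : s ∈ l := (Finset.mem_sort _).2 hscr
      obtain ⟨j, hjs⟩ := List.mem_iff_get.1 hsl
      have hmono : ∀ (j k : Fin l.length), j < k → l.get j < l.get k :=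
        fun _ _ hjk => List.Pairwise.rel_get_of_lt hsort hjk
      have hij : (⟨i, h1⟩ : Fin l.length) < j := by
        by_contra hcon
        push_neg at hcon
        rcases eq_or_lt_of_le hcon with he | hlt
        · rw [← hjs, he] at hs1; simp only [List.get_eq_getElem] at hs1; exact lt_irrefl _ hs1
        · have := hmono j ⟨i, h1⟩ hlt
          rw [hjs] at this
          simp only [List.get_eq_getElem] at this
          exact absurd hs1 (not_lt.mpr this.le)
      have hji : j < (⟨i+1, h2⟩ : Fin l.length) := by
        by_contra hcon
        push_neg at hcon
        rcases eq_or_lt_of_le hcon with he | hlt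
        · rw [← hjs, ← he] at hs2; simp only [List.get_eq_getElem] at hs2
          exact lt_irrefl _ hs2
        · have := hmono ⟨i+1, h2⟩ j hlt
          rw [hjs] at this
          simp only [List.get_eq_getElem] at this
          exact absurd hs2 (not_lt.mpr this.le)
      have : i < j.val := hij
      have : j.val < i + 1 := hji
      omega
    obtain ⟨q, hq, hqaff⟩ := mA_affine_of_no_cross hF hab hnocross
    refine ⟨q.1, q.2, fun t ht => ?_⟩
    have ht0 : 0 ≤ t := le_trans hano.1 ht.1
    have ht1 : t ≤ 1 := le_trans ht.2 hbno.2
    rw [hf t ht0 ht1]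
    exact hqaff t ht.1 ht.2

lemma const_add_mul_mA {F : Finset (ℝ × ℝ)} (hF : F.Nonempty) {a b t : ℝ} (hb : 0 ≤ b) :
    a + b * mA F hF t = F.inf' hF fun q => a + b * (q.1 * t + q.2) := by
  apply le_antisymm
  · apply Finset.le_inf'
    intro q hq
    have := mA_le hF hq t
    nlinarith
  · obtain ⟨q, hq, hqe⟩ := exists_mA_eq hF t
    calc F.inf' hF (fun q => a + b * (q.1 * t + q.2)) ≤ a + b * (q.1 * t + q.2) :=
        Finset.inf'_le _ hq
      _ = a + b * mA F hF t := by rw [hqe]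

lemma dual_rep {ι : Type*} [Fintype ι]
    (p c : ι → ℝ) (hp0 : ∀ i, 0 ≤ p i) (hp1 : ∑ i, p i = 1) (hc : ∀ i, 0 ≤ c i)
    (β : ℝ) (hβ : 0 ≤ β)
    (W : ι → ℝ → ℝ)
    (G : ι → Finset (ℝ × ℝ)) (hG : ∀ i, (G i).Nonempty)
    (hGs : ∀ i, ∀ q ∈ G i, 0 ≤ q.1)
    (hrep : ∀ i, ∀ t, 0 ≤ t → t ≤ 1 → W i t = mA (G i) (hG i) t) :
    ∃ L : Finset ℝ, ∃ hL : L.Nonempty, (∀ lam ∈ L, 0 ≤ lam) ∧ ∃ Φ : ℝ → ℝ,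
      ∀ y : ℝ, 0 ≤ y → y ≤ 1 →
      sSup {r : ℝ | ∃ b : ι → ℝ,
        (∀ i, (0 ≤ y * b i ∧ y * b i ≤ 1) ∧ (p i = 0 → b i = 0)) ∧
        (∑ i, b i * p i) = 1 ∧
        r = ∑ i, (y * b i * c i + β * W i (y * b i)) * p i} =
      L.inf' hL (fun lam => lam * y + Φ lam) := by
  classical
  set Fi : ι → Finset (ℝ × ℝ) := fun i => (G i).image fun q => (c i + β * q.1, β * q.2)
    with hFidef
  have hFi : ∀ i, (Fi i).Nonempty := fun i => (hG i).image _
  have hFslopes : ∀ i, ∀ q ∈ Fi i, 0 ≤ q.1 := by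
    intro i q hq
    simp only [hFidef, Finset.mem_image] at hq
    obtain ⟨q', hq', rfl⟩ := hq
    have := hGs i q' hq'
    have := hc i
    positivity
  -- the value inside the sum is `mA (Fi i)`
  have hH : ∀ i t, 0 ≤ t → t ≤ 1 → c i * t + β * W i t = mA (Fi i) (hFi i) t := by
    intro i t ht0 ht1
    rw [hrep i t ht0 ht1]
    have h1 : c i * t + β * mA (G i) (hG i) t =
        (G i).inf' (hG i) fun q => c i * t + β * (q.1 * t + q.2) :=
      const_add_mul_mA (hG i) hβ
    rw [h1]
    simp only [mA]
    rw [Finset.inf'_image]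
    refine Finset.inf'_congr (H := hG i) rfl fun q hq => ?_
    simp only [Function.comp]
    ring
  set L : Finset ℝ := insert 0 (Finset.univ.biUnion fun i => (Fi i).image Prod.fst) with hLdef
  have hL : L.Nonempty := ⟨0, Finset.mem_insert_self _ _⟩
  have hL0 : ∀ lam ∈ L, 0 ≤ lam := by
    intro lam hlam
    simp only [hLdef, Finset.mem_insert, Finset.mem_biUnion, Finset.mem_image] at hlam
    rcases hlam with rfl | ⟨i, _, q, hq, rfl⟩
    · exact le_refl 0
    · exact hFslopes i q hq
  have hLslope : ∀ i, ∀ q ∈ Fi i, q.1 ∈ L := by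
    intro i q hq
    simp only [hLdef, Finset.mem_insert, Finset.mem_biUnion, Finset.mem_image]
    exact Or.inr ⟨i, Finset.mem_univ i, q, hq, rfl⟩
  set Φ : ℝ → ℝ := fun lam => ∑ i, p i * phi (Fi i) (hFi i) lam with hΦdef
  refine ⟨L, hL, hL0, Φ, ?_⟩
  intro y hy0 hy1
  set Sy := {r : ℝ | ∃ b : ι → ℝ,
    (∀ i, (0 ≤ y * b i ∧ y * b i ≤ 1) ∧ (p i = 0 → b i = 0)) ∧
    (∑ i, b i * p i) = 1 ∧
    r = ∑ i, (y * b i * c i + β * W i (y * b i)) * p i} with hSydef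
  -- weak duality
  have weak : ∀ r ∈ Sy, ∀ lam ∈ L, r ≤ lam * y + Φ lam := by
    intro r hr lam hlam
    obtain ⟨b, hb, hb1, hbr⟩ := hr
    have hterm : ∀ i, (y * b i * c i + β * W i (y * b i)) * p i ≤
        (lam * (y * b i) + phi (Fi i) (hFi i) lam) * p i := by
      intro i
      apply mul_le_mul_of_nonneg_right _ (hp0 i)
      have hyb := (hb i).1
      have hHi := hH i (y * b i) hyb.1 hyb.2
      have := val_le_phi (hFi i) lam hyb.1 hyb.2
      calc y * b i * c i + β * W i (y * b i) = c i * (y * b i) + β * W i (y * b i) := by ring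
        _ = mA (Fi i) (hFi i) (y * b i) := hHi
        _ ≤ lam * (y * b i) + phi (Fi i) (hFi i) lam := by linarith
    calc r = ∑ i, (y * b i * c i + β * W i (y * b i)) * p i := hbr
      _ ≤ ∑ i, (lam * (y * b i) + phi (Fi i) (hFi i) lam) * p i :=
          Finset.sum_le_sum fun i _ => hterm i
      _ = lam * y * (∑ i, b i * p i) + ∑ i, p i * phi (Fi i) (hFi i) lam := by
          rw [Finset.mul_sum, ← Finset.sum_add_distrib]
          apply Finset.sum_congr rfl
          intro i _
          ring
      _ = lam * y + Φ lam := by rw [hb1, hΦdef]; ring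
  -- covering: find lam* with Gm lam* ≤ y ≤ Gp lam*
  set Gp : ℝ → ℝ := fun lam => ∑ i, p i * zhi (Fi i) (hFi i) lam with hGpdef
  set Gm : ℝ → ℝ := fun lam => ∑ i, p i * zlo (Fi i) (hFi i) lam with hGmdef
  have hGp0 : Gp 0 = 1 := by
    simp only [hGpdef]
    rw [← hp1]
    apply Finset.sum_congr rfl
    intro i _
    rw [zhi_eq_one (hFi i) (hFslopes i), mul_one]
  set T := L.filter (fun lam => y ≤ Gp lam) with hTdef
  have hT : T.Nonempty := ⟨0, Finset.mem_filter.mpr ⟨Finset.mem_insert_self _ _, by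
    rw [hGp0]; exact hy1⟩⟩
  set lam₀ := T.max' hT with hlam₀def
  have hlam₀T := T.max'_mem hT
  have hlam₀L : lam₀ ∈ L := (Finset.mem_filter.mp hlam₀T).1
  have hyGp : y ≤ Gp lam₀ := (Finset.mem_filter.mp hlam₀T).2
  have hGmy : Gm lam₀ ≤ y := by
    set S' := L.filter (fun lam => lam₀ < lam) with hS'def
    rcases S'.eq_empty_or_nonempty with hemp | hne
    · -- lam₀ dominates all slopes
      have hGm0 : Gm lam₀ = 0 := by
        rw [hGmdef]
        apply Finset.sum_eq_zero
        intro i _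
        rw [zlo_eq_zero (hFi i) (fun q hq => ?_), mul_zero]
        by_contra hcon
        push_neg at hcon
        have : q.1 ∈ S' := Finset.mem_filter.mpr ⟨hLslope i q hq, hcon⟩
        rw [hemp] at this
        exact absurd this (Finset.notMem_empty _)
      rw [hGm0]; exact hy0
    · set lam₁ := S'.min' hne with hlam₁def
      have hlam₁S := S'.min'_mem hne
      have hlam₁L : lam₁ ∈ L := (Finset.mem_filter.mp hlam₁S).1
      have hlt : lam₀ < lam₁ := (Finset.mem_filter.mp hlam₁S).2
      have hgap : ∀ i, ∀ q ∈ Fi i, ¬(lam₀ < q.1 ∧ q.1 < lam₁) := by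
        rintro i q hq ⟨h1, h2⟩
        have : q.1 ∈ S' := Finset.mem_filter.mpr ⟨hLslope i q hq, h1⟩
        exact absurd (S'.min'_le _ this) (not_le.mpr h2)
      have heq : Gp lam₁ = Gm lam₀ := by
        rw [hGpdef, hGmdef]
        apply Finset.sum_congr rfl
        intro i _
        rw [zhi_eq_zlo_gap (hFi i) hlt (hgap i)]
      have hnotT : ¬ y ≤ Gp lam₁ := by
        intro hcon
        have : lam₁ ∈ T := Finset.mem_filter.mpr ⟨hlam₁L, hcon⟩
        exact absurd (T.le_max' _ this) (not_le.mpr hlt)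
      push_neg at hnotT
      linarith [heq ▸ hnotT]
  -- the optimal primal point
  obtain ⟨θ, hθ0, hθ1, hθy⟩ : ∃ θ : ℝ, 0 ≤ θ ∧ θ ≤ 1 ∧
      θ * Gm lam₀ + (1 - θ) * Gp lam₀ = y := by
    rcases eq_or_lt_of_le (le_trans hGmy hyGp) with heq | hlt
    · exact ⟨0, le_refl 0, zero_le_one, by
        rw [zero_mul, zero_add, sub_zero, one_mul]
        linarith [heq ▸ hGmy]⟩
    · have hne : Gp lam₀ - Gm lam₀ ≠ 0 := ne_of_gt (by linarith)
      refine ⟨(Gp lam₀ - y) / (Gp lam₀ - Gm lam₀),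
        div_nonneg (by linarith) (by linarith), ?_, ?_⟩
      · rw [div_le_one (by linarith)]; linarith
      · field_simp
        ring
  set z : ι → ℝ := fun i => θ * zlo (Fi i) (hFi i) lam₀ + (1 - θ) * zhi (Fi i) (hFi i) lam₀
    with hzdef
  have hzmax : ∀ i, 0 ≤ z i ∧ z i ≤ 1 ∧
      mA (Fi i) (hFi i) (z i) - lam₀ * z i = phi (Fi i) (hFi i) lam₀ := by
    intro i
    have := combo_is_max (hFi i) lam₀ hθ0 hθ1
    exact ⟨this.1, this.2.1, this.2.2⟩
  have hzsum : ∑ i, p i * z i = y := by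
    rw [← hθy, hGmdef, hGpdef, Finset.mul_sum, Finset.mul_sum, ← Finset.sum_add_distrib]
    apply Finset.sum_congr rfl
    intro i _
    simp only [hzdef]
    ring
  have hz0 : y = 0 → ∀ i, p i ≠ 0 → z i = 0 := by
    intro hy i hpi
    have hsum0 : ∑ i, p i * z i = 0 := by rw [hzsum, hy]
    have hnn : ∀ i ∈ Finset.univ, 0 ≤ p i * z i :=
      fun i _ => mul_nonneg (hp0 i) (hzmax i).1
    have := (Finset.sum_eq_zero_iff_of_nonneg hnn).mp hsum0 i (Finset.mem_univ i)
    rcases mul_eq_zero.mp this with h | h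
    · exact absurd h hpi
    · exact h
  set b : ι → ℝ := fun i => if p i = 0 then 0 else (if y = 0 then 1 else z i / y) with hbdef
  have hyb : ∀ i, p i ≠ 0 → y * b i = z i := by
    intro i hpi
    simp only [hbdef, if_neg hpi]
    by_cases hy : y = 0
    · rw [if_pos hy, hy, hz0 hy i hpi]; ring
    · rw [if_neg hy]; field_simp
  have hbmem : (lam₀ * y + Φ lam₀) ∈ Sy := by
    refine ⟨b, fun i => ⟨?_, fun hpi => by simp [hbdef, if_pos hpi]⟩, ?_, ?_⟩
    · by_cases hpi : p i = 0
      · simp [hbdef, if_pos hpi]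
      · rw [hyb i hpi]; exact ⟨(hzmax i).1, (hzmax i).2.1⟩
    · -- sum of b p = 1
      by_cases hy : y = 0
      · rw [← hp1]
        apply Finset.sum_congr rfl
        intro i _
        by_cases hpi : p i = 0
        · simp [hbdef, hpi]
        · simp [hbdef, if_neg hpi, if_pos hy]
      · have : ∀ i, b i * p i = z i * p i / y := by
          intro i
          by_cases hpi : p i = 0
          · simp [hbdef, hpi]
          · simp only [hbdef, if_neg hpi, if_neg hy]
            ring
        rw [Finset.sum_congr rfl fun i _ => this i, ← Finset.sum_div]
        rw [show ∑ i, z i * p i = ∑ i, p i * z i from Finset.sum_congr rfl fun i _ => by ring]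
        rw [hzsum]
        field_simp
    · -- value equation
      have hpt : ∀ i, (y * b i * c i + β * W i (y * b i)) * p i =
          (lam₀ * z i + phi (Fi i) (hFi i) lam₀) * p i := by
        intro i
        by_cases hpi : p i = 0
        · rw [hpi, mul_zero, mul_zero]
        · rw [hyb i hpi]
          congr 1
          have hzi := hzmax i
          calc z i * c i + β * W i (z i) = c i * z i + β * W i (z i) := by ring
            _ = mA (Fi i) (hFi i) (z i) := hH i (z i) hzi.1 hzi.2.1
            _ = lam₀ * z i + phi (Fi i) (hFi i) lam₀ := by linarith [hzi.2.2]
      rw [Finset.sum_congr rfl fun i _ => hpt i]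
      have hfin : ∑ i, (lam₀ * z i + phi (Fi i) (hFi i) lam₀) * p i
          = lam₀ * (∑ i, p i * z i) + Φ lam₀ := by
        simp only [hΦdef]
        rw [Finset.mul_sum, ← Finset.sum_add_distrib]
        apply Finset.sum_congr rfl
        intro i _
        ring
      rw [hfin, hzsum]
  -- conclusion
  have hbdd : BddAbove Sy := ⟨0 * y + Φ 0, fun r hr => weak r hr 0 (Finset.mem_insert_self _ _)⟩
  apply le_antisymm
  · apply csSup_le ⟨_, hbmem⟩
    intro r hr
    apply Finset.le_inf' hL
    intro lam hlam
    exact weak r hr lam hlam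
  · calc L.inf' hL (fun lam => lam * y + Φ lam) ≤ lam₀ * y + Φ lam₀ :=
        Finset.inf'_le _ hlam₀L
      _ ≤ sSup Sy := le_csSup hbdd hbmem

lemma props_of_rep {f : ℝ → ℝ} {F : Finset (ℝ × ℝ)} {hF : F.Nonempty}
    (hs : ∀ q ∈ F, 0 ≤ q.1) (hf : ∀ t, 0 ≤ t → t ≤ 1 → f t = mA F hF t) :
    ContinuousOn f (Set.Icc 0 1) ∧ ConcaveOn ℝ (Set.Icc 0 1) f ∧
      MonotoneOn f (Set.Icc 0 1) ∧ IsPiecewiseLinearOn01 f := by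
  refine ⟨?_, ⟨convex_Icc 0 1, ?_⟩, ?_, isPL_of_mA hF hf⟩
  · exact (mA_continuous F hF).continuousOn.congr fun t ht => hf t ht.1 ht.2
  · intro x hx y hy a b ha hb hab
    have hz : a • x + b • y ∈ Set.Icc (0:ℝ) 1 := (convex_Icc (0:ℝ) 1) hx hy ha hb hab
    rw [hf _ hx.1 hx.2, hf _ hy.1 hy.2, hf _ hz.1 hz.2]
    simp only [smul_eq_mul]
    exact mA_combo hF ha hb hab x y
  · intro x hx y hy hxy
    rw [hf _ hx.1 hx.2, hf _ hy.1 hy.2]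
    exact mA_mono hF hs hxy

end CVaRAux


/-- The value functions of the scaled-CVaR robust MDP, defined recursively by
`V_0(x,y) = y v_0(x)` and
`V_{N+1}(x,y) = min_{a ∈ A(x)} max_{b ∈ B(x,y,a)} Σ_{x'} (y b_{x'} c(x,a,x') + β V_N(x', y b_{x'})) p(x'|x,a)`,
are continuous, concave, nondecreasing, and piecewise linear in `y ∈ [0,1]` for every
horizon `N` and every state `x`. -/
theorem value_functions_concave_piecewise_linear {X A : Type*} [Fintype X] [Nonempty X]
    (Act : X → Finset A) (hA : ∀ x, (Act x).Nonempty)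
    (c : X → A → X → ℝ) (hc : ∀ x a x', 0 ≤ c x a x')
    (p : X → A → X → ℝ) (hp0 : ∀ x a x', 0 ≤ p x a x')
    (hp1 : ∀ x, ∀ a ∈ Act x, (∑ x', p x a x') = 1)
    (β : ℝ) (hβ : β ∈ Set.Icc (0 : ℝ) 1)
    (v0 : X → ℝ) (hv0 : ∀ x, 0 ≤ v0 x)
    (V : ℕ → X → ℝ → ℝ)
    (hV0 : ∀ x y, V 0 x y = y * v0 x)
    (hVrec : ∀ N : ℕ, ∀ x : X, ∀ y ∈ Set.Icc (0 : ℝ) 1,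
      V (N + 1) x y = (Act x).inf' (hA x) fun a => sSup {r : ℝ | ∃ b : X → ℝ,
        (∀ x', (0 ≤ y * b x' ∧ y * b x' ≤ 1) ∧ (p x a x' = 0 → b x' = 0)) ∧
        (∑ x', b x' * p x a x') = 1 ∧
        r = ∑ x', (y * b x' * c x a x' + β * V N x' (y * b x')) * p x a x'}) :
    ∀ N x, ContinuousOn (V N x) (Set.Icc 0 1) ∧ ConcaveOn ℝ (Set.Icc 0 1) (V N x) ∧
      MonotoneOn (V N x) (Set.Icc 0 1) ∧ IsPiecewiseLinearOn01 (V N x) := by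
  classical
  open CVaRAux in
  suffices h : ∀ N x, ∃ (F : Finset (ℝ × ℝ)) (hF : F.Nonempty), (∀ q ∈ F, 0 ≤ q.1) ∧
      ∀ t, 0 ≤ t → t ≤ 1 → V N x t = CVaRAux.mA F hF t by
    intro N x
    obtain ⟨F, hF, hs, hrep⟩ := h N x
    exact CVaRAux.props_of_rep hs hrep
  intro N
  induction N with
  | zero =>
      intro x
      refine ⟨{(v0 x, 0)}, Finset.singleton_nonempty _, ?_, ?_⟩
      · intro q hq
        rw [Finset.mem_singleton] at hq
        rw [hq]
        exact hv0 x
      · intro t _ _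
        rw [hV0]
        simp only [CVaRAux.mA, Finset.inf'_singleton]
        ring
  | succ N ih =>
      intro x
      choose G hG hGs hrep using ih
      have key : ∀ a ∈ Act x, ∃ Λ : Finset (ℝ × ℝ), ∃ hΛ : Λ.Nonempty,
          (∀ q ∈ Λ, 0 ≤ q.1) ∧ ∀ y, 0 ≤ y → y ≤ 1 →
          sSup {r : ℝ | ∃ b : X → ℝ,
            (∀ x', (0 ≤ y * b x' ∧ y * b x' ≤ 1) ∧ (p x a x' = 0 → b x' = 0)) ∧
            (∑ x', b x' * p x a x') = 1 ∧
            r = ∑ x', (y * b x' * c x a x' + β * V N x' (y * b x')) * p x a x'} =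
          Λ.inf' hΛ (fun q => q.1 * y + q.2) := by
        intro a ha
        obtain ⟨L, hL, hL0, Φ, hΦ⟩ := CVaRAux.dual_rep (fun i => p x a i) (fun i => c x a i)
          (hp0 x a) (hp1 x a ha) (hc x a) β hβ.1 (fun i => V N i) G hG hGs hrep
        refine ⟨L.image (fun lam => (lam, Φ lam)), hL.image _, ?_, ?_⟩
        · intro q hq
          rw [Finset.mem_image] at hq
          obtain ⟨lam, hlam, rfl⟩ := hq
          exact hL0 lam hlam
        · intro y hy0 hy1
          rw [hΦ y hy0 hy1, Finset.inf'_image]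
          rfl
      have key' : ∀ a : A, ∃ Λ : Finset (ℝ × ℝ), ∃ hΛ : Λ.Nonempty,
          (∀ q ∈ Λ, 0 ≤ q.1) ∧ (a ∈ Act x → ∀ y, 0 ≤ y → y ≤ 1 →
          sSup {r : ℝ | ∃ b : X → ℝ,
            (∀ x', (0 ≤ y * b x' ∧ y * b x' ≤ 1) ∧ (p x a x' = 0 → b x' = 0)) ∧
            (∑ x', b x' * p x a x') = 1 ∧
            r = ∑ x', (y * b x' * c x a x' + β * V N x' (y * b x')) * p x a x'} =
          Λ.inf' hΛ (fun q => q.1 * y + q.2)) := by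
        intro a
        by_cases ha : a ∈ Act x
        · obtain ⟨Λ, hΛ, hΛs, hΛeq⟩ := key a ha
          exact ⟨Λ, hΛ, hΛs, fun _ => hΛeq⟩
        · exact ⟨{(0, 0)}, Finset.singleton_nonempty _,
            fun q hq => by rw [Finset.mem_singleton] at hq; rw [hq], fun h' => absurd h' ha⟩
      choose Λ hΛ hΛs hΛeq using key'
      refine ⟨(Act x).biUnion Λ, (hA x).biUnion (fun a _ => hΛ a), ?_, ?_⟩
      · intro q hq
        rw [Finset.mem_biUnion] at hq
        obtain ⟨a, ha, hqa⟩ := hq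
        exact hΛs a q hqa
      · intro t ht0 ht1
        rw [hVrec N x t ⟨ht0, ht1⟩]
        have step1 : ((Act x).inf' (hA x) fun a => sSup {r : ℝ | ∃ b : X → ℝ,
            (∀ x', (0 ≤ t * b x' ∧ t * b x' ≤ 1) ∧ (p x a x' = 0 → b x' = 0)) ∧
            (∑ x', b x' * p x a x') = 1 ∧
            r = ∑ x', (t * b x' * c x a x' + β * V N x' (t * b x')) * p x a x'}) =
            (Act x).inf' (hA x) fun a => (Λ a).inf' (hΛ a) (fun q => q.1 * t + q.2) :=
          Finset.inf'_congr (H := hA x) rfl (fun a ha => hΛeq a ha t ht0 ht1)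
        rw [step1]
        simp only [CVaRAux.mA]
        exact (Finset.inf'_biUnion (f := fun q : ℝ × ℝ => q.1 * t + q.2) (Hs := hA x)
          (Ht := fun a => hΛ a)).symm
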